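/- For the Bergman kernel k_w(z) = 1/(1 - conj(w)z)², the metric Γ(a,b) = arccos(|⟨k_a,k_b⟩|/(‖k_a‖‖k_b‖)) on the unit disk satisfies Γ(a,b) = 2·arcsin(ρ(a,b)/√2), where ρ(a,b) = |(a-b)/(1 - conj(a)b)| is the pseudo-hyperbolic distance. -/

import Mathlib

open Complex

/-- For the Bergman kernel `k_w(z) = 1/(1 - conj w * z)²`, the metric
`Γ(a,b) = arccos (|⟨k_a,k_b⟩|/(‖k_a‖‖k_b‖))` on the unit disk satisfies
`Γ(a,b) = 2 arcsin (ρ(a,b)/√2)` for the pseudo-hyperbolic distance `ρ`. -/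
theorem bergman_Gamma_eq_two_arcsin
    (a b : ℂ) (ha : ‖a‖ < 1) (hb : ‖b‖ < 1) :
    Real.arccos (‖1 / (1 - (starRingEnd ℂ) a * b)^2‖ /
        ((1 / (1 - (‖a‖)^2)) * (1 / (1 - (‖b‖)^2)))) =
      2 * Real.arcsin (‖(a - b) / (1 - (starRingEnd ℂ) a * b)‖ / Real.sqrt 2) := by
  have hab : ‖(starRingEnd ℂ) a * b‖ < 1 := by
    rw [norm_mul, Complex.norm_conj]
    nlinarith [norm_nonneg a, norm_nonneg b]
  have hd : (1 : ℂ) - (starRingEnd ℂ) a * b ≠ 0 := by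
    intro h
    have : (1 : ℂ) = (starRingEnd ℂ) a * b := by linear_combination h
    rw [← this] at hab
    simp at hab
  have hdabs : (0:ℝ) < ‖1 - (starRingEnd ℂ) a * b‖ :=
    norm_pos_iff.mpr hd
  have ha2 : (0:ℝ) < 1 - (‖a‖)^2 := by nlinarith [norm_nonneg a]
  have hb2 : (0:ℝ) < 1 - (‖b‖)^2 := by nlinarith [norm_nonneg b]
  -- key algebraic identity
  have key : (‖1 - (starRingEnd ℂ) a * b‖)^2 - (‖a - b‖)^2
      = (1 - (‖a‖)^2) * (1 - (‖b‖)^2) := by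
    simp only [Complex.sq_norm, Complex.normSq_apply, Complex.sub_re, Complex.sub_im,
      Complex.mul_re, Complex.mul_im, Complex.one_re, Complex.one_im,
      Complex.conj_re, Complex.conj_im]
    ring
  set ρ := ‖(a - b) / (1 - (starRingEnd ℂ) a * b)‖ with hρ
  have hρ0 : 0 ≤ ρ := norm_nonneg _
  have hρsq : ρ^2 = (‖a - b‖)^2 / (‖1 - (starRingEnd ℂ) a * b‖)^2 := by
    rw [hρ, norm_div, div_pow]
  have h1ρ : 1 - ρ^2 = (1 - (‖a‖)^2) * (1 - (‖b‖)^2)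
      / (‖1 - (starRingEnd ℂ) a * b‖)^2 := by
    rw [hρsq, ← key]
    rw [sub_div, div_self (pow_pos hdabs 2).ne']
  have hρle : ρ ≤ 1 := by
    nlinarith [div_pos (mul_pos ha2 hb2) (pow_pos hdabs 2), h1ρ]
  -- LHS argument equals 1 - ρ²
  have hargs : ‖1 / (1 - (starRingEnd ℂ) a * b)^2‖ /
      ((1 / (1 - (‖a‖)^2)) * (1 / (1 - (‖b‖)^2))) = 1 - ρ^2 := by
    rw [h1ρ, norm_div, norm_one, norm_pow]
    field_simp
  rw [hargs]
  -- now pure real analysis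
  have hs2 : (0:ℝ) < Real.sqrt 2 := by positivity
  have hle : ρ / Real.sqrt 2 ≤ 1 := by
    rw [div_le_one hs2]
    calc ρ ≤ 1 := hρle
    _ ≤ Real.sqrt 2 := by
      nlinarith [Real.sq_sqrt (by norm_num : (2:ℝ) ≥ 0), hs2]
  have hge : -1 ≤ ρ / Real.sqrt 2 := le_trans (by norm_num) (by positivity : (0:ℝ) ≤ ρ / Real.sqrt 2)
  have hsin : Real.sin (Real.arcsin (ρ / Real.sqrt 2)) = ρ / Real.sqrt 2 :=
    Real.sin_arcsin hge hle
  have hθ0 : 0 ≤ Real.arcsin (ρ / Real.sqrt 2) := Real.arcsin_nonneg.2 (by positivity)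
  have hθpi : Real.arcsin (ρ / Real.sqrt 2) ≤ Real.pi / 2 := Real.arcsin_le_pi_div_two _
  have hcos : Real.cos (2 * Real.arcsin (ρ / Real.sqrt 2)) = 1 - ρ^2 := by
    have hx : (ρ / Real.sqrt 2)^2 ≤ 1 := by nlinarith
    rw [Real.cos_two_mul', hsin, Real.cos_arcsin, Real.sq_sqrt (by linarith),
      div_pow, Real.sq_sqrt (by norm_num : (0:ℝ) ≤ 2)]
    ring
  rw [← hcos, Real.arccos_cos (by linarith) (by linarith)]
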